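/- Every fusion law (X,*) admits a unique finest grading, given by the group Γ_X with presentation ⟨γ_x (x ∈ X) | γ_x γ_y = γ_z whenever z ∈ x * y⟩ and grading map x ↦ γ_x; that is, every grading ζ : (X,*) → (Λ,*) factors as ζ = ρ ∘ ξ for a unique group homomorphism ρ : Γ_X → Λ. -/

import Mathlib

/-- The relators of the finest grading group of a fusion law:
`γ_x γ_y γ_z⁻¹` whenever `z ∈ x * y`. -/
def fusionRels {X : Type*} (law : X → X → Set X) : Set (FreeGroup X) :=
  {r | ∃ x y z, z ∈ law x y ∧ r = FreeGroup.of x * FreeGroup.of y * (FreeGroup.of z)⁻¹}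

/-- Every fusion law admits a unique finest grading, given by the presented group
`Γ_X = ⟨γ_x (x ∈ X) ∣ γ_x γ_y = γ_z whenever z ∈ x * y⟩` with grading map `x ↦ γ_x`:
the map is a grading, and every grading into a group `Λ` factors through it via a
unique group homomorphism. -/
theorem finest_grading {X : Type*} (law : X → X → Set X) :
    (∀ x y z, z ∈ law x y →
      (PresentedGroup.of z : PresentedGroup (fusionRels law)) =
        PresentedGroup.of x * PresentedGroup.of y) ∧
    ∀ (Λ : Type*) [Group Λ] (ζ : X → Λ),
      (∀ x y z, z ∈ law x y → ζ z = ζ x * ζ y) →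
      ∃! ρ : PresentedGroup (fusionRels law) →* Λ,
        ∀ x, ρ (PresentedGroup.of x) = ζ x := by
  constructor
  · intro x y z hz
    have hmem : FreeGroup.of x * FreeGroup.of y * (FreeGroup.of z)⁻¹ ∈ fusionRels law :=
      ⟨x, y, z, hz, rfl⟩
    have : PresentedGroup.mk (fusionRels law)
        (FreeGroup.of x * FreeGroup.of y * (FreeGroup.of z)⁻¹) = 1 := by
      have := (QuotientGroup.eq_one_iff (G := FreeGroup X)
        (N := Subgroup.normalClosure (fusionRels law))
        (FreeGroup.of x * FreeGroup.of y * (FreeGroup.of z)⁻¹)).2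
        (Subgroup.subset_normalClosure hmem)
      exact this
    have h2 : (PresentedGroup.of x * PresentedGroup.of y *
        (PresentedGroup.of z)⁻¹ : PresentedGroup (fusionRels law)) = 1 := by
      exact this
    have := mul_eq_one_iff_eq_inv.mp h2
    simpa using this.symm
  · intro Λ _ ζ hζ
    have h : ∀ r ∈ fusionRels law, FreeGroup.lift ζ r = 1 := by
      rintro r ⟨x, y, z, hz, rfl⟩
      simp [hζ x y z hz, mul_assoc]
    refine ⟨PresentedGroup.toGroup h, fun x => PresentedGroup.toGroup.of h, ?_⟩
    intro g hg
    exact PresentedGroup.ext fun x => by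
      rw [hg x, PresentedGroup.toGroup.of h]
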